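/- arXiv:0806.1854 — 3 statements merged into one kernel-verified Lean document; each statement's English description precedes it below -/
import Mathlib

section
/- Let ħ, m, k₀ > 0 and let V + f = v₁ + f₁ + i(v₂ + f₂) with v₁, f₁, v₂, f₂ real. If k ∈ ℂ and s ∈ ℂ satisfy the system iħs = −(ħ²/(2m))k² + (V+f) and iħs = −iħ√(2ħ/m)·k₀·k − ħk₀² + (V+f), then k = i√(2m/ħ)·k₀ and s = −i k₀² − i(v₁+f₁)/ħ + (v₂+f₂)/ħ. In particular Re(s) ≤ 0 whenever v₂ + f₂ ≤ 0. -/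
theorem stmt_6 (hbar m k₀ v₁ f₁ v₂ f₂ : ℝ) (hhbar : 0 < hbar) (hm : 0 < m) (hk₀ : 0 < k₀)
    (k s : ℂ)
    (h1 : Complex.I * hbar * s = -((hbar^2/(2*m) : ℝ) : ℂ) * k^2 +
      (((v₁+f₁ : ℝ) : ℂ) + Complex.I * ((v₂+f₂ : ℝ) : ℂ)))
    (h2 : Complex.I * hbar * s = -Complex.I * hbar * (Real.sqrt (2*hbar/m) : ℝ) * k₀ * k
      - (hbar : ℂ) * (k₀ : ℂ)^2 + (((v₁+f₁ : ℝ) : ℂ) + Complex.I * ((v₂+f₂ : ℝ) : ℂ))) :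
    k = Complex.I * (Real.sqrt (2*m/hbar) : ℝ) * k₀ ∧
    s = -Complex.I * (k₀ : ℂ)^2 - Complex.I * (((v₁+f₁)/hbar : ℝ) : ℂ) + (((v₂+f₂)/hbar : ℝ) : ℂ) ∧
    (v₂ + f₂ ≤ 0 → s.re ≤ 0) := by
  set a : ℝ := Real.sqrt (2*m/hbar) with ha
  set b : ℝ := Real.sqrt (2*hbar/m) with hb
  have hhC : (hbar : ℂ) ≠ 0 := Complex.ofReal_ne_zero.mpr hhbar.ne'
  have ha2 : a^2 = 2*m/hbar := Real.sq_sqrt (by positivity)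
  have hab : a * b = 2 := by
    rw [ha, hb, ← Real.sqrt_mul (by positivity)]
    have h4 : 2*m/hbar * (2*hbar/m) = 4 := by field_simp; ring
    rw [h4, show (4:ℝ) = 2^2 by norm_num, Real.sqrt_sq (by norm_num)]
  have ha2C : ((a:ℂ))^2 = 2*m/hbar := by
    rw [show ((a:ℂ))^2 = ((a^2 : ℝ) : ℂ) by push_cast; ring, ha2]; push_cast; ring
  have habC : (a:ℂ) * (b:ℂ) = 2 := by
    rw [show (a:ℂ)*(b:ℂ) = ((a*b : ℝ) : ℂ) by push_cast; ring, hab]; norm_num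
  have hmC : (m : ℂ) ≠ 0 := Complex.ofReal_ne_zero.mpr hm.ne'
  have ha2C' : ((a:ℂ))^2 * hbar = 2*m := by
    rw [ha2C]; field_simp
  have hsq : (k - Complex.I * a * k₀)^2 = 0 := by
    have h1' := h1
    push_cast at h1'
    field_simp at h1'
    push_cast at h2
    have hsq' : (hbar:ℂ)^2 * (k - Complex.I * a * k₀)^2 = 0 := by
      linear_combination h1' - (2*(m:ℂ))*h2 +
        ((a:ℂ)^2*(k₀:ℂ)^2*(hbar:ℂ)^2) * Complex.I_sq +
        (-(hbar:ℂ)*(k₀:ℂ)^2 - Complex.I*hbar*k₀*k*b) * ha2C' +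
        (Complex.I*(hbar:ℂ)^2*k₀*k*a) * habC
    rcases mul_eq_zero.mp hsq' with h | h
    · exact absurd h (pow_ne_zero 2 hhC)
    · exact h
  have hk : k = Complex.I * (a:ℂ) * k₀ := by
    have h0 := pow_eq_zero_iff (n := 2) (by norm_num) |>.mp hsq
    linear_combination h0
  refine ⟨hk, ?_, ?_⟩
  · have hIh : Complex.I * hbar ≠ 0 := mul_ne_zero Complex.I_ne_zero hhC
    apply mul_left_cancel₀ hIh
    push_cast at h2 ⊢
    field_simp
    linear_combination (-Complex.I) * h2 + (Complex.I^2*(hbar:ℂ)*b*k₀) * hk +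
      (Complex.I^3*(hbar:ℂ)*(k₀:ℂ)^2) * habC +
      ((hbar:ℂ)*s - (v₂+f₂) + 2*Complex.I*(hbar:ℂ)*(k₀:ℂ)^2) * Complex.I_sq
  · intro hneg
    have hs : s = -Complex.I * (k₀ : ℂ)^2 - Complex.I * (((v₁+f₁)/hbar : ℝ) : ℂ) +
        (((v₂+f₂)/hbar : ℝ) : ℂ) := by
      have hIh : Complex.I * hbar ≠ 0 := mul_ne_zero Complex.I_ne_zero hhC
      apply mul_left_cancel₀ hIh
      push_cast at h2 ⊢
      field_simp
      linear_combination (-Complex.I) * h2 + (Complex.I^2*(hbar:ℂ)*b*k₀) * hk +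
        (Complex.I^3*(hbar:ℂ)*(k₀:ℂ)^2) * habC +
        ((hbar:ℂ)*s - (v₂+f₂) + 2*Complex.I*(hbar:ℂ)*(k₀:ℂ)^2) * Complex.I_sq
    rw [hs]
    simp [Complex.add_re, Complex.sub_re, Complex.mul_re, ← Complex.ofReal_pow]
    exact div_nonpos_of_nonpos_of_nonneg hneg hhbar.le
end

section
/- Let ħ, m, k₀ > 0 and V + f ∈ ℂ with imaginary part v₂ + f₂. Suppose k ∈ ℂ satisfies (ħ²/(2m))k² = (ħ²k₀²/(2m))·(3ik + k₀)/(ik + 3k₀) with ik + 3k₀ ≠ 0. Then k = i k₀ (a double root), and the corresponding s determined by iħs = −(ħ²/(2m))k² + (V+f) satisfies s = −i(ħ/(2m))k₀² − i(v₁+f₁)/ħ + (v₂+f₂)/ħ; hence Re(s) ≤ 0 whenever v₂ + f₂ ≤ 0. -/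
theorem stmt_7 (hbar m k₀ v₁ f₁ v₂ f₂ : ℝ) (hhbar : 0 < hbar) (hm : 0 < m) (hk₀ : 0 < k₀)
    (k s : ℂ)
    (hne : Complex.I * k + 3 * k₀ ≠ 0)
    (hk : ((hbar^2/(2*m) : ℝ) : ℂ) * k^2 =
      ((hbar^2*k₀^2/(2*m) : ℝ) : ℂ) * (3*Complex.I*k + k₀) / (Complex.I*k + 3*k₀))
    (hs : Complex.I * hbar * s = -((hbar^2/(2*m) : ℝ) : ℂ) * k^2 +
      (((v₁+f₁ : ℝ) : ℂ) + Complex.I * ((v₂+f₂ : ℝ) : ℂ))) :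
    k = Complex.I * k₀ ∧
    s = -Complex.I * ((hbar/(2*m) : ℝ) : ℂ) * (k₀ : ℂ)^2
        - Complex.I * (((v₁+f₁)/hbar : ℝ) : ℂ) + (((v₂+f₂)/hbar : ℝ) : ℂ) ∧
    (v₂ + f₂ ≤ 0 → s.re ≤ 0) := by
  have hbC : (hbar : ℂ) ≠ 0 := Complex.ofReal_ne_zero.mpr hhbar.ne'
  have hmC : (m : ℂ) ≠ 0 := Complex.ofReal_ne_zero.mpr hm.ne'
  rw [eq_div_iff hne] at hk
  push_cast at hk
  field_simp at hk
  have heq : k^2*(Complex.I*k + 3*k₀) - (k₀:ℂ)^2*(3*Complex.I*k + k₀) = 0 := by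
    have h2 : (hbar:ℂ)^2 * (k^2*(Complex.I*k + 3*k₀) - (k₀:ℂ)^2*(3*Complex.I*k + k₀)) = 0 := by
      linear_combination (hbar:ℂ)^2*hk
    rcases mul_eq_zero.mp h2 with h3 | h3
    · exact absurd h3 (pow_ne_zero 2 hbC)
    · exact h3
  have hk3 : (k - Complex.I * k₀)^3 = 0 := by
    linear_combination (-Complex.I)*heq + (k^3 - Complex.I*(k₀:ℂ)^3)*Complex.I_sq
  have hkk : k = Complex.I * k₀ :=
    sub_eq_zero.mp (pow_eq_zero_iff (n := 3) (by norm_num) |>.mp hk3)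
  rw [hkk] at hs
  push_cast at hs
  field_simp at hs
  have hIh : Complex.I * (hbar:ℂ) ≠ 0 := mul_ne_zero Complex.I_ne_zero hbC
  have hsval : s = -Complex.I * ((hbar/(2*m) : ℝ) : ℂ) * (k₀ : ℂ)^2
        - Complex.I * (((v₁+f₁)/hbar : ℝ) : ℂ) + (((v₂+f₂)/hbar : ℝ) : ℂ) := by
    apply mul_left_cancel₀ hIh
    push_cast
    field_simp
    linear_combination (-Complex.I)*hs + (2*(hbar:ℂ)*s*(m:ℂ) + (hbar:ℂ)^2*(k₀:ℂ)^2*Complex.I - 2*(m:ℂ)*((v₂:ℂ)+(f₂:ℂ)))*Complex.I_sq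
  refine ⟨hkk, hsval, fun hle => ?_⟩
  rw [hsval]
  simp [Complex.add_re, Complex.sub_re, Complex.neg_re, Complex.mul_re, Complex.mul_im,
    Complex.I_re, Complex.I_im, Complex.ofReal_re, Complex.ofReal_im, pow_two, -Complex.ofReal_div]
  have : (v₂+f₂)/hbar ≤ 0 := div_nonpos_of_nonpos_of_nonneg hle hhbar.le
  linarith
end

section
/- If V(x) and f(|ψ|²) are real-valued (so v₂ + f₂ = 0), then every normal-mode eigenvalue s arising from the second-order boundary dispersion system (iħs = −(ħ²/(2m))k² + V + f and iħs = −iħ√(2ħ/m)k₀k − ħk₀² + V + f with ħ, m, k₀ > 0) is purely imaginary: Re(s) = 0. -/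
theorem stmt_9 (hbar m k₀ Vf : ℝ) (hhbar : 0 < hbar) (hm : 0 < m) (hk₀ : 0 < k₀)
    (k s : ℂ)
    (h1 : Complex.I * hbar * s = -((hbar^2/(2*m) : ℝ) : ℂ) * k^2 + (Vf : ℂ))
    (h2 : Complex.I * hbar * s = -Complex.I * hbar * (Real.sqrt (2*hbar/m) : ℝ) * k₀ * k
      - (hbar : ℂ) * (k₀ : ℂ)^2 + (Vf : ℂ)) :
    s.re = 0 := by
  have hm' : (m : ℂ) ≠ 0 := by exact_mod_cast hm.ne'
  have ha : ((hbar^2/(2*m):ℝ):ℂ) = (hbar:ℂ)^2/(2*m) := by push_cast; ring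
  rw [ha] at h1
  have hr : ((Real.sqrt (2*hbar/m) : ℝ):ℂ)^2 * m = 2*hbar := by
    rw [← Complex.ofReal_pow, Real.sq_sqrt (by positivity)]
    push_cast
    field_simp
  field_simp at h1
  -- h1 : Complex.I * ↑hbar * s * (2 * ↑m) = -(↑hbar ^ 2 * k ^ 2) + ↑Vf * (2 * ↑m)
  have key : ((hbar:ℂ)*k - Complex.I * (Real.sqrt (2*hbar/m) : ℝ) * k₀ * m)^2 = 0 := by
    linear_combination h1 - (2*(m:ℂ))*h2 - ((k₀:ℂ)^2*m)*hr + (((Real.sqrt (2*hbar/m):ℝ):ℂ)^2*(k₀:ℂ)^2*(m:ℂ)^2) * Complex.I_sq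
  have key0 : (hbar:ℂ)*k = Complex.I * ((Real.sqrt (2*hbar/m) * k₀ * m : ℝ) : ℂ) := by
    have := sq_eq_zero_iff.mp key
    push_cast
    linear_combination this
  have hk2 : (hbar:ℂ)^2 * k^2 = -(((Real.sqrt (2*hbar/m) * k₀ * m : ℝ)):ℂ)^2 := by
    linear_combination ((hbar:ℂ)*k + Complex.I * ((Real.sqrt (2*hbar/m) * k₀ * m : ℝ):ℂ)) * key0
      + ((Real.sqrt (2*hbar/m) * k₀ * m : ℝ):ℂ)^2 * Complex.I_sq
  rw [hk2] at h1
  have h1' : Complex.I * (hbar:ℂ) * s * (2*(m:ℂ))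
      = ((((Real.sqrt (2*hbar/m) * k₀ * m)^2 + Vf*(2*m) : ℝ)) : ℂ) := by
    rw [show Complex.I * (hbar:ℂ) * s * (2*(m:ℂ)) = Complex.I * hbar * s * 2 * m by ring, h1]; push_cast; ring
  have him := congrArg Complex.im h1'
  rw [Complex.ofReal_im] at him
  simp [Complex.mul_im, Complex.mul_re] at him
  rcases him with (h | h) | h
  · exact absurd h hhbar.ne'
  · exact h
  · exact absurd h hm.ne'
end
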